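/- Let G = S∞ × S∞ × S∞ be the product of three copies of the finitary symmetric group of ℕ and let ρ be a unitary representation of G on a complex Hilbert space H. For δ ∈ ℕ let H[δ] be the closed subspace of vectors fixed by ρ(k) for all k ∈ K[δ] and P[δ] the orthogonal projection of H onto H[δ]. Then for all p, q ∈ G and all α, β, γ ∈ ℕ there exists N such that for every j ≥ N: P[α] ∘ ρ(p) ∘ P[β] ∘ ρ(q) ∘ P[γ] = P[α] ∘ ρ(p·Θ_j[β]·q) ∘ P[γ]. (Multiplicativity theorem: the assignment of the operator P[α]∘ρ(p)∘P[β] to a double coset is compatible with the product of double cosets.) -/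

import Mathlib

open scoped InnerProductSpace

/-- The finitary symmetric group of a countable set: permutations with finite support. -/
def finitarySymm (Ω : Type*) : Subgroup (Equiv.Perm Ω) where
  carrier := {g | {x | g x ≠ x}.Finite}
  one_mem' := by simp
  mul_mem' := by
    intro a b ha hb
    refine Set.Finite.subset (ha.union hb) fun x hx => ?_
    simp only [Set.mem_setOf_eq, Equiv.Perm.mul_apply] at hx
    simp only [Set.mem_union, Set.mem_setOf_eq]
    by_cases h : b x = x
    · exact Or.inl (by simpa [h] using hx)
    · exact Or.inr h
  inv_mem' := by
    intro a ha
    refine Set.Finite.subset ha fun x hx => ?_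
    simp only [Set.mem_setOf_eq] at hx ⊢
    intro h
    apply hx
    nth_rewrite 1 [← h]
    simp

/-- `S∞`, the finitary symmetric group of `ℕ`. -/
abbrev SInf := ↥(finitarySymm ℕ)

/-- The group `G = S∞ × S∞ × S∞`. -/
abbrev TriG := SInf × SInf × SInf

/-- Membership in the subgroup `K[α] ⊆ G`: diagonal triples `(r, r, r)` with `r ∈ S∞`
fixing every `x < α`. -/
def InKtri (α : ℕ) (k : TriG) : Prop :=
  ∃ r : SInf, (∀ x < α, (r : Equiv.Perm ℕ) x = x) ∧ k = (r, r, r)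

/-- The permutation exchanging the blocks `[β, β+j)` and `[β+j, β+2j)`. -/
def thetaFun (β j : ℕ) (x : ℕ) : ℕ :=
  if β ≤ x ∧ x < β + j then x + j
  else if β + j ≤ x ∧ x < β + 2 * j then x - j
  else x

lemma thetaFun_involutive (β j : ℕ) : Function.Involutive (thetaFun β j) := by
  intro x
  unfold thetaFun
  split_ifs <;> omega

/-- `θ_j[β]` as a permutation of `ℕ`. -/
def thetaPerm (β j : ℕ) : Equiv.Perm ℕ :=
  Function.Involutive.toPerm _ (thetaFun_involutive β j)

lemma thetaPerm_finitary (β j : ℕ) : thetaPerm β j ∈ finitarySymm ℕ := by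
  refine Set.Finite.subset (Set.finite_Iio (β + 2 * j)) fun x hx => ?_
  simp only [Set.mem_setOf_eq, thetaPerm, Function.Involutive.coe_toPerm, thetaFun] at hx
  simp only [Set.mem_Iio]
  by_contra h
  apply hx
  split_ifs <;> omega

/-- `θ_j[β]` as an element of `S∞`. -/
def thetaEl (β j : ℕ) : SInf := ⟨thetaPerm β j, thetaPerm_finitary β j⟩

/-- `Θ_j[β] = (θ_j[β], θ_j[β], θ_j[β])` as an element of `G = S∞ × S∞ × S∞`. -/
def ThetaTri (β j : ℕ) : TriG := (thetaEl β j, thetaEl β j, thetaEl β j)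

/-- Two elements of `G` lie in the same `(K[α], K[γ])`-double coset. -/
def SameDC (α γ : ℕ) (u v : TriG) : Prop :=
  ∃ k₁ k₂ : TriG, InKtri α k₁ ∧ InKtri γ k₂ ∧ u = k₁ * v * k₂

/-- The subspace `H[δ]` of vectors fixed by all operators `ρ(k)`, `k ∈ K[δ]`. -/
def fixedSet {H : Type*} [NormedAddCommGroup H] [InnerProductSpace ℂ H] [CompleteSpace H]
    (ρ : TriG →* unitary (H →L[ℂ] H)) (δ : ℕ) : Set H :=
  {v | ∀ k : TriG, InKtri δ k → (ρ k : H →L[ℂ] H) v = v}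

/-- `P` is the orthogonal projection of `H` onto `H[δ]`: it takes values in `H[δ]` and
`v - P v` is orthogonal to `H[δ]`. -/
def IsProjOntoFixed {H : Type*} [NormedAddCommGroup H] [InnerProductSpace ℂ H]
    [CompleteSpace H] (ρ : TriG →* unitary (H →L[ℂ] H)) (δ : ℕ) (P : H →L[ℂ] H) : Prop :=
  ∀ v : H, P v ∈ fixedSet ρ δ ∧ ∀ w ∈ fixedSet ρ δ, ⟪v - P v, w⟫_ℂ = 0


section Aux

open Filter Finset

lemma thetaPerm_apply (b m x : ℕ) : thetaPerm b m x = thetaFun b m x := rfl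

lemma thetaEl_coe (b m : ℕ) : ((thetaEl b m : SInf) : Equiv.Perm ℕ) = thetaPerm b m := rfl

lemma thetaEl_mul_self (b m : ℕ) : thetaEl b m * thetaEl b m = 1 := by
  apply Subtype.ext
  simp only [Subgroup.coe_mul, thetaEl_coe, OneMemClass.coe_one]
  ext x
  simp [Equiv.Perm.mul_apply, thetaPerm_apply, thetaFun_involutive b m x]

lemma ThetaTri_mul_self (b m : ℕ) : ThetaTri b m * ThetaTri b m = 1 := by
  show ((thetaEl b m, thetaEl b m, thetaEl b m) : TriG) * (thetaEl b m, thetaEl b m, thetaEl b m) = 1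
  rw [Prod.mk_mul_mk, Prod.mk_mul_mk, thetaEl_mul_self]
  rfl

lemma ThetaTri_inv (b m : ℕ) : (ThetaTri b m)⁻¹ = ThetaTri b m :=
  inv_eq_of_mul_eq_one_right (ThetaTri_mul_self b m)

lemma thetaPerm_fix {b m x : ℕ} (h : x < b) : thetaPerm b m x = x := by
  simp only [thetaPerm_apply, thetaFun]
  split_ifs <;> omega

lemma thetaPerm_fix_high {b m x : ℕ} (h : b + 2 * m ≤ x) : thetaPerm b m x = x := by
  simp only [thetaPerm_apply, thetaFun]
  split_ifs <;> omega

lemma InKtri_Theta {δ b : ℕ} (m : ℕ) (h : δ ≤ b) : InKtri δ (ThetaTri b m) :=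
  ⟨thetaEl b m, fun x hx => thetaPerm_fix (lt_of_lt_of_le hx h), rfl⟩

lemma InKtri_inv {δ : ℕ} {k : TriG} (h : InKtri δ k) : InKtri δ k⁻¹ := by
  obtain ⟨r, hr, rfl⟩ := h
  refine ⟨r⁻¹, fun x hx => ?_, rfl⟩
  have h1 : ((r⁻¹ : SInf) : Equiv.Perm ℕ) = ((r : Equiv.Perm ℕ))⁻¹ := rfl
  rw [h1]
  nth_rewrite 1 [← hr x hx]
  exact Equiv.symm_apply_apply _ _

lemma InKtri_mono {δ δ' : ℕ} {k : TriG} (h : δ' ≤ δ) (hk : InKtri δ k) : InKtri δ' k := by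
  obtain ⟨r, hr, rfl⟩ := hk
  exact ⟨r, fun x hx => hr x (lt_of_lt_of_le hx h), rfl⟩

variable {H : Type*} [NormedAddCommGroup H] [InnerProductSpace ℂ H] [CompleteSpace H]
  (ρ : TriG →* unitary (H →L[ℂ] H))

/-- Shorthand for the operator attached to `g`. -/
noncomputable def Uop (g : TriG) : H →L[ℂ] H := ρ g

lemma Uop_apply_mul (a b : TriG) (x : H) : Uop ρ (a * b) x = Uop ρ a (Uop ρ b x) := by
  simp only [Uop, map_mul]
  rfl

lemma Uop_inner (g : TriG) (x y : H) : ⟪Uop ρ g x, Uop ρ g y⟫_ℂ = ⟪x, y⟫_ℂ := by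
  have hmem := (ρ g).prop
  have h1 : star ((ρ g : H →L[ℂ] H)) * (ρ g : H →L[ℂ] H) = 1 := (Unitary.mem_iff.mp hmem).1
  calc ⟪Uop ρ g x, Uop ρ g y⟫_ℂ
      = ⟪x, ContinuousLinearMap.adjoint (ρ g : H →L[ℂ] H) (Uop ρ g y)⟫_ℂ := by
        rw [ContinuousLinearMap.adjoint_inner_right]; rfl
    _ = ⟪x, (star ((ρ g : H →L[ℂ] H)) * (ρ g : H →L[ℂ] H)) y⟫_ℂ := by
        rw [ContinuousLinearMap.star_eq_adjoint]; rfl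
    _ = ⟪x, y⟫_ℂ := by rw [h1]; rfl

lemma Uop_norm (g : TriG) (x : H) : ‖Uop ρ g x‖ = ‖x‖ := by
  have h := Uop_inner ρ g x x
  rw [inner_self_eq_norm_sq_to_K, inner_self_eq_norm_sq_to_K] at h
  have h2 : (‖Uop ρ g x‖ : ℝ) ^ 2 = ‖x‖ ^ 2 := by
    exact_mod_cast congrArg Complex.re h
  nlinarith [norm_nonneg (Uop ρ g x), norm_nonneg x]

lemma Uop_inv_apply (g : TriG) (x : H) : Uop ρ g⁻¹ (Uop ρ g x) = x := by
  rw [← Uop_apply_mul, inv_mul_cancel]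
  show (ρ 1 : H →L[ℂ] H) x = x
  rw [map_one]
  rfl

lemma Uop_inner_comm (g : TriG) (x y : H) : ⟪Uop ρ g x, y⟫_ℂ = ⟪x, Uop ρ g⁻¹ y⟫_ℂ := by
  conv_lhs => rw [← Uop_inv_apply ρ g⁻¹ y]
  rw [inv_inv, Uop_inner]

lemma Uop_inner_comm' (g : TriG) (x y : H) : ⟪x, Uop ρ g y⟫_ℂ = ⟪Uop ρ g⁻¹ x, y⟫_ℂ := by
  rw [Uop_inner_comm, inv_inv]

lemma fixedSet_mono {δ δ' : ℕ} (h : δ ≤ δ') : fixedSet ρ δ ⊆ fixedSet ρ δ' := by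
  intro v hv k hk
  exact hv k (InKtri_mono h hk)

lemma mem_fixedSet_apply {δ : ℕ} {v : H} (hv : v ∈ fixedSet ρ δ) {k : TriG}
    (hk : InKtri δ k) : Uop ρ k v = v := hv k hk

end Aux

section Aux2

open Filter Finset

variable {H : Type*} [NormedAddCommGroup H] [InnerProductSpace ℂ H] [CompleteSpace H]
  (ρ : TriG →* unitary (H →L[ℂ] H))

lemma subgroup_coe_mul (a b : SInf) :
    ((a * b : SInf) : Equiv.Perm ℕ) = (a : Equiv.Perm ℕ) * (b : Equiv.Perm ℕ) := rfl

/-- Invariance of a sufficiently fixed vector under `ρ(r,r,r) ∘ ρ(Θ_j[β])`. -/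
lemma fix_aux {L β S j : ℕ} (hL : L ≤ β + j) (hS : S ≤ β + j)
    (r : SInf) (hrβ : ∀ x, x < β → (r : Equiv.Perm ℕ) x = x)
    (hrS : ∀ x, S ≤ x → (r : Equiv.Perm ℕ) x = x)
    {ξ : H} (hξ : ξ ∈ fixedSet ρ L) :
    Uop ρ ((r, r, r) : TriG) (Uop ρ (ThetaTri β j) ξ) = Uop ρ (ThetaTri β j) ξ := by
  set θ : SInf := thetaEl β j with hθ
  set r' : SInf := θ * r * θ with hr'
  have hcomp : ((r, r, r) : TriG) * ThetaTri β j = ThetaTri β j * ((r', r', r') : TriG) := by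
    have h1 : θ * r' = r * θ := by
      rw [hr', ← mul_assoc, ← mul_assoc, thetaEl_mul_self, one_mul]
    show ((r, r, r) : TriG) * (θ, θ, θ) = ((θ, θ, θ) : TriG) * (r', r', r')
    simp only [Prod.mk_mul_mk]
    rw [h1]
  have hr'fix : ∀ x, x < β + j → (r' : Equiv.Perm ℕ) x = x := by
    intro x hx
    have hcoe : (r' : Equiv.Perm ℕ) = thetaPerm β j * (r : Equiv.Perm ℕ) * thetaPerm β j := by
      rfl
    rw [hcoe]
    simp only [Equiv.Perm.mul_apply]
    rcases lt_or_ge x β with hxβ | hxβ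
    · rw [thetaPerm_fix hxβ, hrβ x hxβ, thetaPerm_fix hxβ]
    · have e1 : thetaPerm β j x = x + j := by
        simp only [thetaPerm_apply, thetaFun]
        split_ifs <;> omega
      have e2 : (r : Equiv.Perm ℕ) (x + j) = x + j := hrS _ (by omega)
      have e3 : thetaPerm β j (x + j) = x := by
        simp only [thetaPerm_apply, thetaFun]
        split_ifs <;> omega
      rw [e1, e2, e3]
  have hmem : InKtri L ((r', r', r') : TriG) :=
    ⟨r', fun x hx => hr'fix x (lt_of_lt_of_le hx hL), rfl⟩
  rw [← Uop_apply_mul, hcomp, Uop_apply_mul, mem_fixedSet_apply ρ hξ hmem]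

/-- One-step double-coset invariance. -/
lemma const_step {L β j j'' : ℕ} (h1 : L ≤ β + j) (h2 : j ≤ j'') (h3 : L + j ≤ β + j'')
    {ξ η : H} (hξ : ξ ∈ fixedSet ρ L) (hη : η ∈ fixedSet ρ L) :
    ⟪Uop ρ (ThetaTri β j'') ξ, η⟫_ℂ = ⟪Uop ρ (ThetaTri β j) ξ, η⟫_ℂ := by
  set d : ℕ := j'' - j with hd
  set k' : SInf := thetaEl (β + j) d with hk'
  set kh : SInf := thetaEl β j'' * k' * thetaEl β j with hkh
  have hId : ThetaTri β j'' =
      ((kh, kh, kh) : TriG) * ThetaTri β j * ((k', k', k') : TriG) := by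
    have h4 : kh * thetaEl β j * k' = thetaEl β j'' := by
      rw [hkh, mul_assoc (thetaEl β j'' * k'), thetaEl_mul_self, mul_one,
        mul_assoc, thetaEl_mul_self, mul_one]
    show (ThetaTri β j'' : TriG) = ((kh, kh, kh) : TriG) * (thetaEl β j, thetaEl β j, thetaEl β j) * (k', k', k')
    simp only [Prod.mk_mul_mk]
    rw [h4]
    rfl
  have hk'mem : InKtri L ((k', k', k') : TriG) := by
    refine ⟨k', fun x hx => ?_, rfl⟩
    rw [hk', thetaEl_coe]
    exact thetaPerm_fix (by omega)
  have hkhmem : InKtri L ((kh, kh, kh) : TriG) := by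
    refine ⟨kh, fun x hx => ?_, rfl⟩
    have hcoe : (kh : Equiv.Perm ℕ) = thetaPerm β j'' * thetaPerm (β + j) d * thetaPerm β j := by
      rfl
    rw [hcoe]
    simp only [Equiv.Perm.mul_apply]
    rcases lt_or_ge x β with hxβ | hxβ
    · rw [thetaPerm_fix hxβ, thetaPerm_fix (show x < β + j by omega), thetaPerm_fix hxβ]
    · have e1 : thetaPerm β j x = x + j := by
        simp only [thetaPerm_apply, thetaFun]; split_ifs <;> omega
      have e2 : thetaPerm (β + j) d (x + j) = x + j'' := by
        simp only [thetaPerm_apply, thetaFun]; split_ifs <;> omega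
      have e3 : thetaPerm β j'' (x + j'') = x := by
        simp only [thetaPerm_apply, thetaFun]; split_ifs <;> omega
      rw [e1, e2, e3]
  rw [hId, Uop_apply_mul, Uop_apply_mul, mem_fixedSet_apply ρ hξ hk'mem,
    Uop_inner_comm, mem_fixedSet_apply ρ hη (InKtri_inv hkhmem)]

/-- Double-coset invariance: the pairing is independent of `j`. -/
lemma const_aux {L β j₁ j₂ : ℕ} (h1 : L ≤ β + j₁) (h2 : L ≤ β + j₂)
    {ξ η : H} (hξ : ξ ∈ fixedSet ρ L) (hη : η ∈ fixedSet ρ L) :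
    ⟪Uop ρ (ThetaTri β j₁) ξ, η⟫_ℂ = ⟪Uop ρ (ThetaTri β j₂) ξ, η⟫_ℂ := by
  have e1 := const_step ρ (j := j₁) (j'' := L + j₁ + j₂) h1 (by omega) (by omega) hξ hη
  have e2 := const_step ρ (j := j₂) (j'' := L + j₁ + j₂) h2 (by omega) (by omega) hξ hη
  rw [← e1, ← e2]

end Aux2

section Aux3

open Filter Finset

lemma exists_bound (u : SInf) : ∃ S : ℕ, ∀ x, S ≤ x → (u : Equiv.Perm ℕ) x = x := by
  obtain ⟨S, hS⟩ := (u.prop : {x | (u : Equiv.Perm ℕ) x ≠ x}.Finite).bddAbove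
  refine ⟨S + 1, fun x hx => ?_⟩
  by_contra h
  have := hS (show x ∈ {x | (u : Equiv.Perm ℕ) x ≠ x} from h)
  omega

lemma perm_inv_fix {u : SInf} {S : ℕ} (h : ∀ x, S ≤ x → (u : Equiv.Perm ℕ) x = x) :
    ∀ x, S ≤ x → ((u⁻¹ : SInf) : Equiv.Perm ℕ) x = x := by
  intro x hx
  have h1 : ((u⁻¹ : SInf) : Equiv.Perm ℕ) = ((u : Equiv.Perm ℕ))⁻¹ := rfl
  rw [h1]
  nth_rewrite 1 [← h x hx]
  exact Equiv.symm_apply_apply _ _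

variable {H : Type*} [NormedAddCommGroup H] [InnerProductSpace ℂ H] [CompleteSpace H]
  (ρ : TriG →* unitary (H →L[ℂ] H))

lemma proj_symm {δ : ℕ} {P : H →L[ℂ] H} (hP : IsProjOntoFixed ρ δ P) (x y : H) :
    ⟪P x, y⟫_ℂ = ⟪x, P y⟫_ℂ := by
  have h1 : ⟪x - P x, P y⟫_ℂ = 0 := (hP x).2 _ (hP y).1
  have h2 : ⟪y - P y, P x⟫_ℂ = 0 := (hP y).2 _ (hP x).1
  have h3 : ⟪P x, y - P y⟫_ℂ = 0 := by
    rw [← inner_conj_symm, h2, map_zero]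
  rw [inner_sub_right] at h3
  rw [inner_sub_left] at h1
  have h4 : ⟪P x, y⟫_ℂ = ⟪P x, P y⟫_ℂ := by linear_combination h3
  have h5 : ⟪x, P y⟫_ℂ = ⟪P x, P y⟫_ℂ := by linear_combination h1
  rw [h4, h5]

/-- `ρ(g)` preserves `fixedSet ρ L` when the components of `g` are supported below `L`. -/
lemma fixed_of_commuting {L : ℕ} {g : TriG}
    (h1 : ∀ x, L ≤ x → (g.1 : Equiv.Perm ℕ) x = x)
    (h2 : ∀ x, L ≤ x → (g.2.1 : Equiv.Perm ℕ) x = x)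
    (h3 : ∀ x, L ≤ x → (g.2.2 : Equiv.Perm ℕ) x = x)
    {ξ : H} (hξ : ξ ∈ fixedSet ρ L) : Uop ρ g ξ ∈ fixedSet ρ L := by
  intro k hk
  obtain ⟨r, hr, rfl⟩ := hk
  have hcomm : ∀ (u : SInf), (∀ x, L ≤ x → (u : Equiv.Perm ℕ) x = x) → r * u = u * r := by
    intro u hu
    apply Subtype.ext
    rw [subgroup_coe_mul, subgroup_coe_mul]
    refine (Equiv.Perm.Disjoint.commute ?_).eq
    intro x
    rcases lt_or_ge x L with hx | hx
    · exact Or.inl (hr x hx)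
    · exact Or.inr (hu x hx)
  have hmul : ((r, r, r) : TriG) * g = g * ((r, r, r) : TriG) := by
    obtain ⟨g1, g2, g3⟩ := g
    simp only [Prod.mk_mul_mk]
    rw [hcomm g1 h1, hcomm g2 h2, hcomm g3 h3]
  show Uop ρ ((r, r, r) : TriG) (Uop ρ g ξ) = Uop ρ g ξ
  rw [← Uop_apply_mul, hmul, Uop_apply_mul, mem_fixedSet_apply ρ hξ ⟨r, hr, rfl⟩]

lemma sum_gram (c σ : ℝ) (n n' : ℕ) :
    (∑ m ∈ Finset.range n, ∑ m' ∈ Finset.range n', if m = m' then c else σ)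
      = (min n n' : ℝ) * (c - σ) + (n * n' : ℝ) * σ := by
  have h1 : ∀ m, (∑ m' ∈ Finset.range n', if m = m' then c else σ)
      = (if m ∈ Finset.range n' then (c - σ) else 0) + (n' : ℝ) * σ := by
    intro m
    have e : ∀ m', (if m = m' then c else σ) = (if m' = m then (c - σ) else 0) + σ := by
      intro m'
      by_cases h : m = m' <;> simp [h, eq_comm] <;> ring
    rw [Finset.sum_congr rfl fun m' _ => e m', Finset.sum_add_distrib,
      Finset.sum_ite_eq' (Finset.range n') m (fun _ => c - σ), Finset.sum_const]
    simp [mul_comm]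
  rw [Finset.sum_congr rfl fun m _ => h1 m, Finset.sum_add_distrib, Finset.sum_const]
  have h2 : (∑ m ∈ Finset.range n, if m ∈ Finset.range n' then (c - σ) else 0)
      = (min n n' : ℝ) * (c - σ) := by
    rw [Finset.sum_ite_mem]
    have : Finset.range n ∩ Finset.range n' = Finset.range (min n n') := by
      ext a; simp only [Finset.mem_inter, Finset.mem_range]; omega
    rw [this, Finset.sum_const, Finset.card_range, nsmul_eq_mul]
    try push_cast
    try ring
  rw [h2]
  simp only [Finset.card_range, nsmul_eq_mul]
  try push_cast
  try ring

end Aux3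

section Key

open Filter Finset Topology

lemma myre (r : ℝ) (z : ℂ) : RCLike.re ((r : ℂ) * z) = r * RCLike.re z := by
  simp [RCLike.re_ofReal_mul]

variable {H : Type*} [NormedAddCommGroup H] [InnerProductSpace ℂ H] [CompleteSpace H]
  (ρ : TriG →* unitary (H →L[ℂ] H))

set_option maxHeartbeats 2000000 in
lemma key_lemma {L β : ℕ} (hβL : β ≤ L) {Pβ : H →L[ℂ] H}
    (hPβ : IsProjOntoFixed ρ β Pβ) {ξ η : H}
    (hξ : ξ ∈ fixedSet ρ L) (hη : η ∈ fixedSet ρ L) {j : ℕ} (hj : L ≤ β + j) :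
    ⟪Uop ρ (ThetaTri β j) ξ, η⟫_ℂ = ⟪Pβ ξ, η⟫_ℂ := by
  have hPmem : Pβ ξ ∈ fixedSet ρ β := (hPβ ξ).1
  have hPmemL : Pβ ξ ∈ fixedSet ρ L := fixedSet_mono ρ hβL hPmem
  set ζ : H := ξ - Pβ ξ with hζdef
  have hζ : ζ ∈ fixedSet ρ L := by
    intro k hk
    show Uop ρ k (ξ - Pβ ξ) = ξ - Pβ ξ
    rw [map_sub, mem_fixedSet_apply ρ hξ hk, mem_fixedSet_apply ρ hPmemL hk]
  have hperp : ∀ u ∈ fixedSet ρ β, ⟪ζ, u⟫_ℂ = 0 := (hPβ ξ).2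
  have hsplit : Uop ρ (ThetaTri β j) ξ = Pβ ξ + Uop ρ (ThetaTri β j) ζ := by
    have hx : ξ = Pβ ξ + ζ := by rw [hζdef]; abel
    conv_lhs => rw [hx]
    rw [map_add, mem_fixedSet_apply ρ hPmem (InKtri_Theta j le_rfl)]
  rw [hsplit, inner_add_left]
  suffices hT : ⟪Uop ρ (ThetaTri β j) ζ, η⟫_ℂ = 0 by rw [hT, add_zero]
  -- the sequence of block sizes
  set jj : ℕ → ℕ := fun m => (L + 1) * 2 ^ m with hjjdef
  have hjjL : ∀ m, L + 1 ≤ jj m := by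
    intro m
    have h1 : 1 ≤ 2 ^ m := Nat.one_le_two_pow
    calc L + 1 = (L + 1) * 1 := by ring
    _ ≤ (L + 1) * 2 ^ m := Nat.mul_le_mul_left _ h1
  have hjjm : ∀ m, m + 1 ≤ jj m := by
    intro m
    have h1 : m < 2 ^ m := Nat.lt_two_pow_self
    calc m + 1 ≤ 2 ^ m := h1
    _ = 1 * 2 ^ m := by ring
    _ ≤ (L + 1) * 2 ^ m := Nat.mul_le_mul_right _ (by omega)
  have hjj2 : ∀ m m', m' < m → 2 * jj m' ≤ jj m := by
    intro m m' h
    calc 2 * jj m' = (L + 1) * 2 ^ (m' + 1) := by rw [hjjdef]; ring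
    _ ≤ (L + 1) * 2 ^ m := Nat.mul_le_mul_left _ (Nat.pow_le_pow_right (by omega) (by omega))
  set V : ℕ → H := fun m => Uop ρ (ThetaTri β (jj m)) ζ with hVdef
  set T : ℂ := ⟪Uop ρ (ThetaTri β j) ζ, η⟫_ℂ with hTdef
  have hVη : ∀ m, ⟪V m, η⟫_ℂ = T :=
    fun m => const_aux ρ (by have := hjjL m; omega) hj hζ hη
  have hfixV : ∀ m' m, m' < m → Uop ρ (ThetaTri β (jj m')) (V m) = V m := by
    intro m' m h
    exact fix_aux ρ (L := L) (S := β + 2 * jj m') (by have := hjjL m; omega)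
      (by have := hjj2 m m' h; omega) (thetaEl β (jj m'))
      (fun x hx => thetaPerm_fix hx) (fun x hx => thetaPerm_fix_high hx) hζ
  have hGram : ∀ m m', m' < m → ⟪V m, V m'⟫_ℂ = ⟪V m, ζ⟫_ℂ := by
    intro m m' h
    show ⟪V m, Uop ρ (ThetaTri β (jj m')) ζ⟫_ℂ = ⟪V m, ζ⟫_ℂ
    rw [Uop_inner_comm', ThetaTri_inv, hfixV m' m h]
  have hs : ∀ m, ⟪V m, ζ⟫_ℂ = ⟪V 0, ζ⟫_ℂ :=
    fun m => const_aux ρ (by have := hjjL m; omega) (by have := hjjL 0; omega) hζ hζ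
  set σ : ℝ := RCLike.re ⟪V 0, ζ⟫_ℂ with hσdef
  set c : ℝ := ‖ζ‖ ^ 2 with hcdef
  have hre : ∀ m m', RCLike.re ⟪V m, V m'⟫_ℂ = if m = m' then c else σ := by
    intro m m'
    rcases lt_trichotomy m m' with h | h | h
    · rw [if_neg h.ne]
      rw [← inner_conj_symm, hGram m' m h, hs m', RCLike.conj_re]
    · subst h
      rw [if_pos rfl]
      show RCLike.re ⟪Uop ρ (ThetaTri β (jj m)) ζ, Uop ρ (ThetaTri β (jj m)) ζ⟫_ℂ = c
      rw [Uop_inner, hcdef]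
      exact inner_self_eq_norm_sq ζ
    · rw [if_neg (Ne.symm h.ne), hGram m m' h, hs m]
  set W : ℕ → H := fun n => ∑ m ∈ Finset.range n, V m with hWdef
  set A : ℕ → H := fun n => (((n : ℝ))⁻¹ : ℂ) • W n with hAdef
  have hWre : ∀ n n', RCLike.re ⟪W n, W n'⟫_ℂ
      = (min n n' : ℝ) * (c - σ) + ((n : ℝ) * (n' : ℝ)) * σ := by
    intro n n'
    show RCLike.re ⟪∑ m ∈ Finset.range n, V m, ∑ m' ∈ Finset.range n', V m'⟫_ℂ = _
    rw [sum_inner, map_sum]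
    have hrow : ∀ m, RCLike.re ⟪V m, ∑ m' ∈ Finset.range n', V m'⟫_ℂ
        = ∑ m' ∈ Finset.range n', if m = m' then c else σ := by
      intro m
      rw [inner_sum, map_sum]
      exact Finset.sum_congr rfl fun m' _ => hre m m'
    rw [Finset.sum_congr rfl fun m _ => hrow m, sum_gram]
  have hAre : ∀ n n', RCLike.re ⟪A n, A n'⟫_ℂ
      = (n : ℝ)⁻¹ * ((n' : ℝ)⁻¹ * ((min n n' : ℝ) * (c - σ) + ((n : ℝ) * (n' : ℝ)) * σ)) := by
    intro n n'
    have hinner : ⟪A n, A n'⟫_ℂ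
        = (((n : ℝ))⁻¹ : ℂ) * ((((n' : ℝ))⁻¹ : ℂ) * ⟪W n, W n'⟫_ℂ) := by
      simp only [hAdef, inner_smul_left, inner_smul_right, map_inv₀, Complex.conj_ofReal]
      ring
    rw [hinner, ← Complex.ofReal_inv, ← Complex.ofReal_inv, myre, myre, hWre]
  have hnormA : ∀ n, ‖A n‖ ^ 2 = RCLike.re ⟪A n, A n⟫_ℂ :=
    fun n => (inner_self_eq_norm_sq (𝕜 := ℂ) (A n)).symm
  have hcσ : 0 ≤ c - σ := by
    have h1 : σ ≤ ‖V 0‖ * ‖ζ‖ := re_inner_le_norm (𝕜 := ℂ) (V 0) ζ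
    have h2 : ‖V 0‖ = ‖ζ‖ := Uop_norm ρ _ ζ
    rw [h2] at h1
    have h3 : σ ≤ c := by rw [hcdef]; nlinarith
    linarith
  have hcauchy : CauchySeq A := by
    rw [Metric.cauchySeq_iff']
    intro ε hε
    obtain ⟨N₀, hN₀⟩ := exists_nat_gt ((c - σ) / ε ^ 2)
    refine ⟨N₀ + 1, fun n hn => ?_⟩
    set N : ℕ := N₀ + 1 with hNdef
    have hN1 : (1 : ℝ) ≤ (N : ℝ) := by exact_mod_cast Nat.one_le_iff_ne_zero.mpr (by omega)
    have hn1 : (1 : ℝ) ≤ (n : ℝ) := by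
      have : 1 ≤ n := le_trans (by omega) hn
      exact_mod_cast this
    have hNn : (N : ℝ) ≤ (n : ℝ) := by exact_mod_cast hn
    have hn0 : (n : ℝ) ≠ 0 := by linarith
    have hN0 : (N : ℝ) ≠ 0 := by linarith
    have hd2 : ‖A n - A N‖ ^ 2 = (c - σ) / (N : ℝ) - (c - σ) / (n : ℝ) := by
      rw [norm_sub_sq (𝕜 := ℂ), hnormA n, hnormA N, hAre, hAre, hAre,
        min_self, min_self, min_eq_right hNn]
      field_simp
      ring
    have hlt : ‖A n - A N‖ ^ 2 < ε ^ 2 := by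
      rw [hd2]
      have h3 : (c - σ) / (N : ℝ) < ε ^ 2 := by
        rw [div_lt_iff₀ (by linarith)]
        have h4 : (c - σ) / ε ^ 2 < (N : ℝ) := by
          calc (c - σ) / ε ^ 2 < (N₀ : ℝ) := hN₀
          _ ≤ (N : ℝ) := by exact_mod_cast Nat.le_succ N₀
        calc c - σ = ((c - σ) / ε ^ 2) * ε ^ 2 := by field_simp
        _ < (N : ℝ) * ε ^ 2 := by apply mul_lt_mul_of_pos_right h4 (by positivity)
        _ = ε ^ 2 * (N : ℝ) := by ring
      have h5 : 0 ≤ (c - σ) / (n : ℝ) := by positivity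
      linarith
    rw [dist_eq_norm]
    nlinarith [norm_nonneg (A n - A N), hε]
  obtain ⟨w, hw⟩ := cauchySeq_tendsto_of_complete hcauchy
  have hnorm2ζ : ∀ m, ‖V m‖ = ‖ζ‖ := fun m => Uop_norm ρ _ ζ
  have hwfix : w ∈ fixedSet ρ β := by
    intro k hk
    obtain ⟨r, hrβ, rfl⟩ := hk
    obtain ⟨S, hS⟩ := exists_bound r
    have hfix : ∀ m, S ≤ m → Uop ρ ((r, r, r) : TriG) (V m) = V m := by
      intro m hm
      exact fix_aux ρ (by have := hjjL m; omega)
        (by have := hjjm m; omega) r (fun x hx => hrβ x hx) hS hζ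
    have hbound : ∀ n : ℕ, ‖Uop ρ ((r, r, r) : TriG) (A n) - A n‖
        ≤ ((S : ℝ) * (2 * ‖ζ‖)) / n := by
      intro n
      have e1 : Uop ρ ((r, r, r) : TriG) (A n) - A n
          = (((n : ℝ))⁻¹ : ℂ) • (∑ m ∈ Finset.range n,
              (Uop ρ ((r, r, r) : TriG) (V m) - V m)) := by
        simp only [hAdef, hWdef, map_smul, map_sum, ← smul_sub, ← Finset.sum_sub_distrib]
      rw [e1, norm_smul]
      have e2 : ‖(((n : ℝ))⁻¹ : ℂ)‖ = ((n : ℝ))⁻¹ := by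
        rw [norm_inv, Complex.norm_real, Real.norm_natCast]
      rw [e2]
      have e3 : ‖∑ m ∈ Finset.range n, (Uop ρ ((r, r, r) : TriG) (V m) - V m)‖
          ≤ (S : ℝ) * (2 * ‖ζ‖) := by
        calc ‖∑ m ∈ Finset.range n, (Uop ρ ((r, r, r) : TriG) (V m) - V m)‖
            ≤ ∑ m ∈ Finset.range n, ‖Uop ρ ((r, r, r) : TriG) (V m) - V m‖ :=
              norm_sum_le _ _
          _ ≤ ∑ m ∈ Finset.range n, (if m ∈ Finset.range S then 2 * ‖ζ‖ else 0) := by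
              apply Finset.sum_le_sum
              intro m _
              by_cases hm : m ∈ Finset.range S
              · rw [if_pos hm]
                calc ‖Uop ρ ((r, r, r) : TriG) (V m) - V m‖
                    ≤ ‖Uop ρ ((r, r, r) : TriG) (V m)‖ + ‖V m‖ := norm_sub_le _ _
                  _ = 2 * ‖ζ‖ := by rw [Uop_norm, hnorm2ζ m]; ring
              · rw [if_neg hm, hfix m (by simp only [Finset.mem_range] at hm; omega)]
                simp
          _ ≤ (S : ℝ) * (2 * ‖ζ‖) := by
              rw [Finset.sum_ite_mem, Finset.sum_const, nsmul_eq_mul]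
              have hcard : ((Finset.range n ∩ Finset.range S).card : ℝ) ≤ (S : ℝ) := by
                have := Finset.card_le_card
                  (Finset.inter_subset_right (s₁ := Finset.range n) (s₂ := Finset.range S))
                simp only [Finset.card_range] at this
                exact_mod_cast this
              nlinarith [norm_nonneg ζ]
      calc ((n : ℝ))⁻¹ * ‖∑ m ∈ Finset.range n, (Uop ρ ((r, r, r) : TriG) (V m) - V m)‖
          ≤ ((n : ℝ))⁻¹ * ((S : ℝ) * (2 * ‖ζ‖)) := by
            apply mul_le_mul_of_nonneg_left e3 (by positivity)
        _ = ((S : ℝ) * (2 * ‖ζ‖)) / n := by rw [div_eq_inv_mul]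
    have hdiff : Tendsto (fun n => Uop ρ ((r, r, r) : TriG) (A n) - A n) atTop (𝓝 0) :=
      squeeze_zero_norm hbound (tendsto_const_div_atTop_nhds_zero_nat _)
    have h1 : Tendsto (fun n => Uop ρ ((r, r, r) : TriG) (A n)) atTop
        (𝓝 (Uop ρ ((r, r, r) : TriG) w)) :=
      ((Uop ρ ((r, r, r) : TriG)).continuous.tendsto w).comp hw
    have h2 : Tendsto (fun n => Uop ρ ((r, r, r) : TriG) (A n)) atTop (𝓝 w) := by
      have h3 := hdiff.add hw
      simp only [sub_add_cancel, zero_add] at h3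
      exact h3
    exact tendsto_nhds_unique h1 h2
  have hVw : ∀ m, ⟪V m, w⟫_ℂ = 0 := by
    intro m
    show ⟪Uop ρ (ThetaTri β (jj m)) ζ, w⟫_ℂ = 0
    rw [Uop_inner_comm, ThetaTri_inv, mem_fixedSet_apply ρ hwfix (InKtri_Theta (jj m) le_rfl)]
    exact hperp w hwfix
  have hAw : ∀ n, ⟪A n, w⟫_ℂ = 0 := by
    intro n
    simp only [hAdef, hWdef, inner_smul_left, sum_inner, hVw, Finset.sum_const_zero, mul_zero]
  have hw0 : w = 0 := by
    have h1 : Tendsto (fun n => ⟪A n, w⟫_ℂ) atTop (𝓝 ⟪w, w⟫_ℂ) :=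
      hw.inner tendsto_const_nhds
    have h2 : Tendsto (fun n => ⟪A n, w⟫_ℂ) atTop (𝓝 0) := by
      simp only [hAw]
      exact tendsto_const_nhds
    exact inner_self_eq_zero.mp (tendsto_nhds_unique h1 h2)
  have hAη : ∀ n : ℕ, 1 ≤ n → ⟪A n, η⟫_ℂ = T := by
    intro n hn
    have hne : ((n : ℕ) : ℂ) ≠ 0 := Nat.cast_ne_zero.mpr (by omega)
    simp only [hAdef, hWdef, inner_smul_left, sum_inner, Complex.conj_ofReal]
    rw [Finset.sum_congr rfl fun m _ => hVη m, Finset.sum_const, Finset.card_range,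
      nsmul_eq_mul]
    rw [map_inv₀, Complex.conj_ofReal]
    push_cast
    field_simp
  have h1 : Tendsto (fun n => ⟪A n, η⟫_ℂ) atTop (𝓝 ⟪w, η⟫_ℂ) :=
    hw.inner tendsto_const_nhds
  have h2 : Tendsto (fun n => ⟪A n, η⟫_ℂ) atTop (𝓝 T) := by
    apply Tendsto.congr' (EventuallyEq.symm ?_) tendsto_const_nhds
    filter_upwards [eventually_ge_atTop 1] with n hn
    exact hAη n hn
  have hfin : T = ⟪w, η⟫_ℂ := tendsto_nhds_unique h2 h1
  rw [hfin, hw0, inner_zero_left]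

end Key


/-- **Multiplicativity theorem (Theorem 3.4)**: for any unitary representation `ρ` of
`G = S∞ × S∞ × S∞` the compressions `P[α] ∘ ρ(·) ∘ P[β]` are multiplicative along the
product of double cosets: `P[α]∘ρ(p)∘P[β]∘ρ(q)∘P[γ] = P[α]∘ρ(p·Θ_j[β]·q)∘P[γ]` for all
sufficiently large `j`. -/
theorem tri_multiplicativity {H : Type*} [NormedAddCommGroup H] [InnerProductSpace ℂ H]
    [CompleteSpace H] (ρ : TriG →* unitary (H →L[ℂ] H))
    (α β γ : ℕ) (Pα Pβ Pγ : H →L[ℂ] H)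
    (hPα : IsProjOntoFixed ρ α Pα) (hPβ : IsProjOntoFixed ρ β Pβ)
    (hPγ : IsProjOntoFixed ρ γ Pγ) (p q : TriG) :
    ∃ N : ℕ, ∀ j ≥ N,
      Pα ∘L (ρ p : H →L[ℂ] H) ∘L Pβ ∘L (ρ q : H →L[ℂ] H) ∘L Pγ =
        Pα ∘L (ρ (p * ThetaTri β j * q) : H →L[ℂ] H) ∘L Pγ := by
  obtain ⟨S1, hS1⟩ := exists_bound p.1
  obtain ⟨S2, hS2⟩ := exists_bound p.2.1
  obtain ⟨S3, hS3⟩ := exists_bound p.2.2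
  obtain ⟨S4, hS4⟩ := exists_bound q.1
  obtain ⟨S5, hS5⟩ := exists_bound q.2.1
  obtain ⟨S6, hS6⟩ := exists_bound q.2.2
  set L : ℕ := α + β + γ + S1 + S2 + S3 + S4 + S5 + S6 with hLdef
  refine ⟨L, fun j hj => ?_⟩
  have hβL : β ≤ L := by omega
  have hjL : L ≤ β + j := by omega
  ext v
  apply ext_inner_right ℂ
  intro w
  have hξL : Pγ v ∈ fixedSet ρ L := fixedSet_mono ρ (by omega) (hPγ v).1
  have hξ' : Uop ρ q (Pγ v) ∈ fixedSet ρ L :=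
    fixed_of_commuting ρ (fun x hx => hS4 x (by omega)) (fun x hx => hS5 x (by omega))
      (fun x hx => hS6 x (by omega)) hξL
  have hηL : Pα w ∈ fixedSet ρ L := fixedSet_mono ρ (by omega) (hPα w).1
  have hη' : Uop ρ p⁻¹ (Pα w) ∈ fixedSet ρ L :=
    fixed_of_commuting ρ (fun x hx => perm_inv_fix hS1 x (by omega))
      (fun x hx => perm_inv_fix hS2 x (by omega))
      (fun x hx => perm_inv_fix hS3 x (by omega)) hηL
  show ⟪Pα (Uop ρ p (Pβ (Uop ρ q (Pγ v)))), w⟫_ℂ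
      = ⟪Pα (Uop ρ (p * ThetaTri β j * q) (Pγ v)), w⟫_ℂ
  rw [proj_symm ρ hPα, proj_symm ρ hPα, Uop_inner_comm ρ p,
    Uop_apply_mul ρ (p * ThetaTri β j) q, Uop_apply_mul ρ p (ThetaTri β j),
    Uop_inner_comm ρ p]
  exact (key_lemma ρ hβL hPβ hξ' hη' hjL).symm
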